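/- Let κ be a cardinal, and for each α < κ let (G_{α,k})_{k∈ℕ} be an inverse system of abelian groups with maps p_{α,j,k} : G_{α,j} → G_{α,k} for j ≥ k. For x ∈ ℕ^κ set G_x = ⊕_{α<κ} G_{α,x(α)}, with maps p_{y,x} = ⊕_α p_{α,y(α),x(α)} for x ≤ y pointwise. Then the inverse limit of the system (G_x)_{x∈ℕ^κ} over the directed poset ℕ^κ is isomorphic to the direct sum ⊕_{α<κ} lim_k G_{α,k}. -/
import Mathlib


/-- The inverse limit of an inverse system over a preorder `P`, realized as the
subgroup of the product consisting of compatible threads. -/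
def invLimit {P : Type*} [Preorder P] {G : P → Type*} [∀ x, AddCommGroup (G x)]
    (p : ∀ ⦃x y : P⦄, x ≤ y → G y →+ G x) : AddSubgroup (∀ x, G x) where
  carrier := {f | ∀ ⦃x y : P⦄ (h : x ≤ y), p h (f y) = f x}
  add_mem' := by intro a b ha hb x y h; simp [ha h, hb h]
  zero_mem' := by intro x y h; simp
  neg_mem' := by intro a ha x y h; simp [ha h]

section Aux

variable {ι : Type} {G : ι → ℕ → Type} [∀ α k, AddCommGroup (G α k)]
  (p : ∀ (α : ι) ⦃k j : ℕ⦄, k ≤ j → G α j →+ G α k)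

/-- The big limit. -/
abbrev BigLim : AddSubgroup (∀ x : ι → ℕ, Π₀ α, G α (x α)) :=
  invLimit (G := fun x : ι → ℕ => Π₀ α, G α (x α))
    (fun x y h => DFinsupp.mapRange.addMonoidHom (fun α => p α (h α)))

lemma bigLim_key (f : BigLim p) (x : ι → ℕ) (α : ι) :
    f.1 x α = f.1 (fun _ => x α) α := by
  set z : ι → ℕ := fun β => max (x β) (x α) with hz
  have h1 : x ≤ z := fun β => le_max_left _ _
  have h2 : (fun _ => x α) ≤ z := fun β => le_max_right _ _
  have e1 := congrArg (fun d => d α) (f.2 h1)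
  have e2 := congrArg (fun d => d α) (f.2 h2)
  simp only [DFinsupp.mapRange.addMonoidHom_apply, DFinsupp.mapRange_apply] at e1 e2
  rw [← e1, ← e2]

/-- thread of f at α, as element of the small limit. -/
def thread (f : BigLim p) (α : ι) : invLimit (G := G α) (fun _ _ h => p α h) :=
  ⟨fun k => f.1 (fun _ => k) α, by
    intro k j h
    have := congrArg (fun d => d α)
      (f.2 (show (fun _ : ι => k) ≤ fun _ => j from fun _ => h))
    simpa using this⟩

noncomputable def fwd (f : BigLim p) :
    Π₀ α, invLimit (G := G α) (fun _ _ h => p α h) := by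
  classical
  refine ⟨fun α => thread p f α, ?_⟩
  set x₀ : ι → ℕ := fun α =>
    if h : ∃ k, f.1 (fun _ => k) α ≠ 0 then h.choose else 0 with hx₀
  refine (f.1 x₀).support'.map (fun s => ⟨s.1, fun α => (s.2 α).imp id fun h0 => ?_⟩)
  -- h0 : f.1 x₀ α = 0 ; show thread = 0
  apply Subtype.ext
  funext k
  by_contra hk
  have hex : ∃ k, f.1 (fun _ => k) α ≠ 0 := ⟨k, by simpa [thread] using hk⟩
  have h0' : (f.1 x₀) α = 0 := h0
  have key : f.1 x₀ α = f.1 (fun _ => x₀ α) α := bigLim_key p f x₀ α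
  rw [h0'] at key
  have hx : x₀ α = hex.choose := by simp [hx₀, hex]
  rw [hx] at key
  exact hex.choose_spec key.symm

def bwd (g : Π₀ α, invLimit (G := G α) (fun _ _ h => p α h)) : BigLim p := by
  refine ⟨fun x => DFinsupp.mapRange (fun α s => s.1 (x α)) (fun α => rfl) g, ?_⟩
  intro x y h
  ext α
  simp only [DFinsupp.mapRange.addMonoidHom_apply, DFinsupp.mapRange_apply]
  exact (g α).2 (h α)

end Aux

/-- For `Ω_κ`-type data: the inverse limit over the directed poset `ℕ^κ` of the system
`G_x = ⊕_{α<κ} G_{α,x(α)}` with maps `p_{y,x} = ⊕_α p_{α,y(α),x(α)}` is isomorphic to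
the direct sum `⊕_{α<κ} lim_k G_{α,k}`. -/
theorem stmt_10 (ι : Type) (G : ι → ℕ → Type) [∀ α k, AddCommGroup (G α k)]
    (p : ∀ (α : ι) ⦃k j : ℕ⦄, k ≤ j → G α j →+ G α k)
    (hrefl : ∀ (α : ι) (k : ℕ), p α (le_refl k) = AddMonoidHom.id (G α k))
    (hcomp : ∀ (α : ι) ⦃k j l : ℕ⦄ (h₁ : k ≤ j) (h₂ : j ≤ l),
      (p α h₁).comp (p α h₂) = p α (h₁.trans h₂)) :
    Nonempty
      ((invLimit (G := fun x : ι → ℕ => Π₀ α, G α (x α))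
          (fun x y h => DFinsupp.mapRange.addMonoidHom (fun α => p α (h α)))) ≃+
        (Π₀ α : ι, (invLimit (G := G α) (fun _ _ h => p α h)))) := by
  refine ⟨AddEquiv.mk' ⟨fwd p, bwd p, ?_, ?_⟩ ?_⟩
  · -- left inverse : bwd (fwd f) = f
    intro f
    apply Subtype.ext
    funext x
    ext α
    have : (fwd p f) α = thread p f α := rfl
    simp only [bwd, DFinsupp.mapRange_apply, this, thread]
    exact (bigLim_key p f x α).symm
  · -- right inverse : fwd (bwd g) = g
    intro g
    ext α k
    show (thread p (bwd p g) α).1 k = (g α).1 k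
    simp [thread, bwd, DFinsupp.mapRange_apply]
  · -- additivity
    intro f g
    ext α k
    have h1 : (fwd p (f + g)) α = thread p (f + g) α := rfl
    have h2 : (fwd p f) α = thread p f α := rfl
    have h3 : (fwd p g) α = thread p g α := rfl
    simp [h1, h2, h3, thread]
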